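/- If the Euclidean distance from a0 to the Newton polytope P satisfies d(a0, P) > diam(P)/m, where diam(P) is the Euclidean diameter of P, then the set U₋ = {x ∈ ℝ^m : Ψ(x) < 1} is a nonempty, open and unbounded subset of ℝ^m. -/

import Mathlib

open scoped BigOperators RealInnerProductSpace
open Finset

noncomputable section

/-- `ℝ^m` with the standard (Euclidean) inner product. -/
abbrev Vm (m : ℕ) := EuclideanSpace ℝ (Fin m)

/-- The diagonal covariance `K(x) = Σ_{a∈A} α_a² exp(2⟨a,x⟩)`. -/
def covK {m : ℕ} (A : Finset (Vm m)) (α : Vm m → ℝ) (x : Vm m) : ℝ :=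
  ∑ a ∈ A, (α a) ^ 2 * Real.exp (2 * ⟪a, x⟫)

/-- The potential `Φ(x) = (1/2) log K(x)`. -/
def pot {m : ℕ} (A : Finset (Vm m)) (α : Vm m → ℝ) (x : Vm m) : ℝ :=
  (1 / 2) * Real.log (covK A α x)

/-- The weights `λ_a(x) = α_a² exp(2⟨a,x⟩)/K(x)`. -/
def wt {m : ℕ} (A : Finset (Vm m)) (α : Vm m → ℝ) (a x : Vm m) : ℝ :=
  (α a) ^ 2 * Real.exp (2 * ⟪a, x⟫) / covK A α x

/-- The moment map `μ(x) = Σ_{a∈A} λ_a(x) • a`. -/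
def mmap {m : ℕ} (A : Finset (Vm m)) (α : Vm m → ℝ) (x : Vm m) : Vm m :=
  ∑ a ∈ A, wt A α a x • a

/-- The Adler–Taylor quadratic form `g_x(v) = Σ_{a∈A} λ_a(x)·⟨a − μ(x), v⟩²`. -/
def atForm {m : ℕ} (A : Finset (Vm m)) (α : Vm m → ℝ) (x v : Vm m) : ℝ :=
  ∑ a ∈ A, wt A α a x * ⟪a - mmap A α x, v⟫ ^ 2


/-- The matrix `G(x) = Σ_{a∈A} λ_a(x)·(a − μ(x))(a − μ(x))ᵀ`. -/
def Gmat {m : ℕ} (A : Finset (Vm m)) (α : Vm m → ℝ) (x : Vm m) :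
    Matrix (Fin m) (Fin m) ℝ :=
  Matrix.of fun i j => ∑ a ∈ A, wt A α a x * ((a - mmap A α x) i * (a - mmap A α x) j)

/-- The quantity `⟨μ(x) − a0, G(x)⁻¹(μ(x) − a0)⟩`. -/
def qform {m : ℕ} (A : Finset (Vm m)) (α : Vm m → ℝ) (a0 : Vm m) (x : Vm m) : ℝ :=
  dotProduct (fun i => (mmap A α x - a0) i)
    ((Gmat A α x)⁻¹.mulVec fun i => (mmap A α x - a0) i)

/-- `f0(x) = α0·exp(⟨a0,x⟩)`. -/
def f0e {m : ℕ} (a0 : Vm m) (α0 : ℝ) (x : Vm m) : ℝ := α0 * Real.exp ⟪a0, x⟫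

/-- `K0(x) = K(x) + f0(x)²`. -/
def K0e {m : ℕ} (A : Finset (Vm m)) (α : Vm m → ℝ) (a0 : Vm m) (α0 : ℝ) (x : Vm m) : ℝ :=
  covK A α x + f0e a0 α0 x ^ 2

/-- `Φ0(x) = Φ(x) − log f0(x)`. -/
def Phi0e {m : ℕ} (A : Finset (Vm m)) (α : Vm m → ℝ) (a0 : Vm m) (α0 : ℝ) (x : Vm m) : ℝ :=
  pot A α x - Real.log (f0e a0 α0 x)

/-- `Ψ(x) = (K(x)/K0(x))^{m/2}·sqrt(1 + (f0(x)²/K0(x))·⟨μ(x) − a0, G(x)⁻¹(μ(x) − a0)⟩)`. -/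
def PsiF {m : ℕ} (A : Finset (Vm m)) (α : Vm m → ℝ) (a0 : Vm m) (α0 : ℝ) (x : Vm m) : ℝ :=
  (covK A α x / K0e A α a0 α0 x) ^ ((m : ℝ) / 2) *
    Real.sqrt (1 + (f0e a0 α0 x ^ 2 / K0e A α a0 α0 x) * qform A α a0 x)

namespace St7

variable {m : ℕ} {A : Finset (Vm m)} {α : Vm m → ℝ}

lemma inner_coords (w v : Vm m) : ⟪w, v⟫ = ∑ i, w i * v i := by
  simp [PiLp.inner_apply, RCLike.inner_apply, conj_trivial]
  exact Finset.sum_congr rfl fun i _ => mul_comm _ _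

lemma norm_sq_coords (y : Vm m) : ‖y‖ ^ 2 = ∑ i, y i ^ 2 := by
  rw [← real_inner_self_eq_norm_sq, inner_coords]
  exact Finset.sum_congr rfl fun i _ => (sq (y i)).symm

lemma covK_pos (hA : A.Nonempty) (hα : ∀ a ∈ A, 0 < α a) (x : Vm m) : 0 < covK A α x :=
  Finset.sum_pos (fun a ha => mul_pos (pow_pos (hα a ha) 2) (Real.exp_pos _)) hA

lemma wt_pos (hA : A.Nonempty) (hα : ∀ a ∈ A, 0 < α a) {a : Vm m} (ha : a ∈ A) (x : Vm m) :
    0 < wt A α a x := by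
  have := covK_pos hA hα x
  have := hα a ha
  unfold wt; positivity

lemma sum_wt (hA : A.Nonempty) (hα : ∀ a ∈ A, 0 < α a) (x : Vm m) :
    ∑ a ∈ A, wt A α a x = 1 := by
  unfold wt
  rw [← Finset.sum_div, div_eq_one_iff_eq (covK_pos hA hα x).ne']
  rfl

lemma mmap_mem (hA : A.Nonempty) (hα : ∀ a ∈ A, 0 < α a) (x : Vm m) :
    mmap A α x ∈ convexHull ℝ (A : Set (Vm m)) := by
  have h := Finset.centerMass_mem_convexHull A (fun a ha => (wt_pos hA hα ha x).le)
    (by rw [sum_wt hA hα x]; norm_num) (fun a ha => Finset.mem_coe.mpr ha)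
  rwa [Finset.centerMass_eq_of_sum_1 _ _ (sum_wt hA hα x)] at h

lemma quad_eq (x : Vm m) (y : Fin m → ℝ) :
    dotProduct y ((Gmat A α x).mulVec y) =
      ∑ a ∈ A, wt A α a x * (∑ i, (a - mmap A α x) i * y i) ^ 2 := by
  simp only [dotProduct, Matrix.mulVec, Gmat, Matrix.of_apply, Finset.sum_mul,
    Finset.mul_sum]
  conv_lhs => enter [2, i]; rw [Finset.sum_comm]
  rw [Finset.sum_comm]
  refine Finset.sum_congr rfl fun a _ => ?_
  simp only [sq, Finset.sum_mul, Finset.mul_sum]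
  refine Finset.sum_congr rfl fun i _ => ?_
  refine Finset.sum_congr rfl fun j _ => ?_
  ring

lemma span_inner_zero (hspan : affineSpan ℝ (A : Set (Vm m)) = ⊤) {μ y : Vm m}
    (h : ∀ a ∈ A, ⟪a - μ, y⟫ = 0) : y = 0 := by
  have hvs : vectorSpan ℝ (A : Set (Vm m)) = ⊤ := by
    rw [← direction_affineSpan, hspan, AffineSubspace.direction_top]
  have hle : vectorSpan ℝ (A : Set (Vm m)) ≤ LinearMap.ker (innerSL ℝ y).toLinearMap := by
    rw [vectorSpan_def]
    refine Submodule.span_le.mpr ?_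
    rintro w hw
    rw [Set.mem_vsub] at hw
    obtain ⟨a, ha, b, hb, rfl⟩ := hw
    have h1 := h a ha
    have h2 := h b hb
    simp only [SetLike.mem_coe, LinearMap.mem_ker, ContinuousLinearMap.coe_coe, innerSL_apply_apply]
    have : ⟪y, a -ᵥ b⟫ = ⟪a - μ, y⟫ - ⟪b - μ, y⟫ := by
      rw [real_inner_comm]
      simp [vsub_eq_sub, inner_sub_left]
    rw [this, h1, h2, sub_zero]
  have hy : y ∈ LinearMap.ker (innerSL ℝ y).toLinearMap := hle (hvs ▸ Submodule.mem_top)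
  exact inner_self_eq_zero.mp (LinearMap.mem_ker.mp hy)

lemma sum_sq_pos (hspan : affineSpan ℝ (A : Set (Vm m)) = ⊤) (w : Vm m → ℝ)
    (hw : ∀ a ∈ A, 0 < w a) (μ : Vm m) {y : Vm m} (hy : y ≠ 0) :
    0 < ∑ a ∈ A, w a * ⟪a - μ, y⟫ ^ 2 := by
  have h0 : ∀ a ∈ A, 0 ≤ w a * ⟪a - μ, y⟫ ^ 2 :=
    fun a ha => mul_nonneg (hw a ha).le (sq_nonneg _)
  rcases (Finset.sum_nonneg h0).lt_or_eq with h | h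
  · exact h
  · exfalso
    apply hy
    apply span_inner_zero hspan
    intro a ha
    have hz := (Finset.sum_eq_zero_iff_of_nonneg h0).mp h.symm a ha
    have hwne := (hw a ha).ne'
    have hsq : ⟪a - μ, y⟫ ^ 2 = 0 := by
      rcases mul_eq_zero.mp hz with h' | h'
      · exact absurd h' hwne
      · exact h'
    exact pow_eq_zero_iff (by norm_num) |>.mp hsq

lemma Gmat_posdef (hA : A.Nonempty) (hα : ∀ a ∈ A, 0 < α a)
    (hspan : affineSpan ℝ (A : Set (Vm m)) = ⊤) (x : Vm m) : (Gmat A α x).PosDef := by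
  refine Matrix.PosDef.of_dotProduct_mulVec_pos ?_ ?_
  · ext i j
    simp only [Gmat, Matrix.conjTranspose_apply, Matrix.of_apply, star_trivial]
    exact Finset.sum_congr rfl fun a _ => by ring
  · intro y hy
    have hy' : (WithLp.toLp 2 y : Vm m) ≠ 0 := fun h => hy (by simpa using congrArg WithLp.ofLp h)
    rw [star_trivial, quad_eq x y]
    have := sum_sq_pos hspan (fun a => wt A α a x) (fun a ha => wt_pos hA hα ha x)
      (mmap A α x) hy'
    simpa only [inner_coords, PiLp.toLp_apply] using this

lemma Gmat_det_ne (hA : A.Nonempty) (hα : ∀ a ∈ A, 0 < α a)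
    (hspan : affineSpan ℝ (A : Set (Vm m)) = ⊤) (x : Vm m) : (Gmat A α x).det ≠ 0 :=
  (Gmat_posdef hA hα hspan x).det_pos.ne'

section cont
variable (hA : A.Nonempty) (hα : ∀ a ∈ A, 0 < α a)
  (hspan : affineSpan ℝ (A : Set (Vm m)) = ⊤)

lemma covK_cont : Continuous fun x => covK A α x := by
  unfold covK
  exact continuous_finset_sum _ fun a _ =>
    continuous_const.mul (Real.continuous_exp.comp
      (continuous_const.mul (Continuous.inner continuous_const continuous_id)))

include hA hα in
lemma wt_cont (a : Vm m) : Continuous fun x => wt A α a x := by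
  unfold wt
  exact Continuous.div
    (continuous_const.mul (Real.continuous_exp.comp
      (continuous_const.mul (Continuous.inner continuous_const continuous_id))))
    covK_cont (fun x => (covK_pos hA hα x).ne')

include hA hα in
lemma mmap_cont : Continuous fun x => mmap A α x := by
  unfold mmap
  exact continuous_finset_sum _ fun a _ => (wt_cont hA hα a).smul continuous_const

include hA hα in
lemma Gmat_cont : Continuous fun x => Gmat A α x := by
  apply continuous_matrix
  intro i j
  refine continuous_finset_sum _ fun a _ => (wt_cont hA hα a).mul (Continuous.mul ?_ ?_) <;>
  · exact (PiLp.continuous_apply _ _ _).comp (continuous_const.sub (mmap_cont hA hα))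

include hA hα hspan in
lemma GmatInv_cont : Continuous fun x => (Gmat A α x)⁻¹ := by
  have : (fun x => (Gmat A α x)⁻¹) =
      fun x => ((Gmat A α x).det)⁻¹ • (Gmat A α x).adjugate := by
    funext x
    rw [Matrix.inv_def, Ring.inverse_eq_inv']
  rw [this]
  exact Continuous.smul
    ((Gmat_cont hA hα).matrix_det.inv₀ (fun x => Gmat_det_ne hA hα hspan x))
    (Gmat_cont hA hα).matrix_adjugate

include hA hα hspan in
lemma qform_cont (a0 : Vm m) : Continuous fun x => qform A α a0 x := by
  unfold qform
  have hw : ∀ i, Continuous fun x => (mmap A α x - a0) i := fun i =>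
    (PiLp.continuous_apply _ _ _).comp ((mmap_cont hA hα).sub continuous_const)
  simp only [dotProduct, Matrix.mulVec]
  exact continuous_finset_sum _ fun i _ => (hw i).mul <| continuous_finset_sum _ fun j _ =>
    Continuous.mul
      ((continuous_apply j).comp ((continuous_apply i).comp (GmatInv_cont hA hα hspan))) (hw j)

include hA hα hspan in
lemma PsiF_cont (a0 : Vm m) (α0 : ℝ) (hα0 : 0 < α0) : Continuous fun x => PsiF A α a0 α0 x := by
  unfold PsiF
  have hf0 : Continuous fun x => f0e a0 α0 x :=
    continuous_const.mul
      (Real.continuous_exp.comp (Continuous.inner continuous_const continuous_id))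
  have hK0 : Continuous fun x => K0e A α a0 α0 x := covK_cont.add (hf0.pow 2)
  have hK0pos : ∀ x, 0 < K0e A α a0 α0 x := fun x => by
    have h1 := covK_pos hA hα x
    unfold K0e f0e
    positivity
  refine Continuous.mul ?_ ?_
  · exact (covK_cont.div hK0 (fun x => (hK0pos x).ne')).rpow_const
      (fun x => Or.inr (by positivity))
  · exact Real.continuous_sqrt.comp <| continuous_const.add <|
      ((hf0.pow 2).div hK0 (fun x => (hK0pos x).ne')).mul (qform_cont hA hα hspan a0)

end cont

lemma invq (M : Matrix (Fin m) (Fin m) ℝ) (hdet : M.det ≠ 0) {ε : ℝ} (hε : 0 < ε)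
    (hquad : ∀ y : Fin m → ℝ, ε * (∑ i, y i ^ 2) ≤ dotProduct y (M.mulVec y))
    (w : Fin m → ℝ) :
    0 ≤ dotProduct w (M⁻¹.mulVec w) ∧
      dotProduct w (M⁻¹.mulVec w) ≤ (∑ i, w i ^ 2) / ε := by
  set y := M⁻¹.mulVec w with hy
  have hMy : M.mulVec y = w := by
    rw [hy, Matrix.mulVec_mulVec, Matrix.mul_nonsing_inv _ (isUnit_iff_ne_zero.mpr hdet),
      Matrix.one_mulVec]
  have ht : dotProduct w y = dotProduct y (M.mulVec y) := by
    rw [hMy, dotProduct_comm]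
  have h1 : ε * (∑ i, y i ^ 2) ≤ dotProduct w y := ht ▸ hquad y
  have hSy : (0:ℝ) ≤ ∑ i, y i ^ 2 := Finset.sum_nonneg fun i _ => sq_nonneg _
  have hSw : (0:ℝ) ≤ ∑ i, w i ^ 2 := Finset.sum_nonneg fun i _ => sq_nonneg _
  have ht0 : 0 ≤ dotProduct w y := le_trans (by positivity) h1
  refine ⟨ht0, ?_⟩
  have hCS : (dotProduct w y) ^ 2 ≤ (∑ i, w i ^ 2) * ∑ i, y i ^ 2 :=
    Finset.sum_mul_sq_le_sq_mul_sq Finset.univ w y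
  rw [le_div_iff₀ hε]
  rcases ht0.lt_or_eq with h | h
  · have h2 : ε * (dotProduct w y) ^ 2 ≤ ε * ((∑ i, w i ^ 2) * ∑ i, y i ^ 2) :=
      mul_le_mul_of_nonneg_left hCS hε.le
    have h3 : (∑ i, w i ^ 2) * (ε * ∑ i, y i ^ 2) ≤ (∑ i, w i ^ 2) * dotProduct w y :=
      mul_le_mul_of_nonneg_left h1 hSw
    nlinarith
  · rw [← h]
    simpa using hSw

lemma exists_c0 (hm : 1 ≤ m) (hA : A.Nonempty)
    (hspan : affineSpan ℝ (A : Set (Vm m)) = ⊤) :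
    ∃ c0 > 0, ∀ μ ∈ convexHull ℝ (A : Set (Vm m)), ∀ y : Vm m,
      c0 * ‖y‖ ^ 2 ≤ ∑ a ∈ A, ⟪a - μ, y⟫ ^ 2 := by
  set P := convexHull ℝ (A : Set (Vm m)) with hP
  have hPc : IsCompact P := A.finite_toSet.isCompact_convexHull ℝ
  obtain ⟨a1, ha1⟩ := hA
  have hPne : P.Nonempty := ⟨a1, subset_convexHull ℝ _ ha1⟩
  have hsph : IsCompact (Metric.sphere (0 : Vm m) 1) := isCompact_sphere _ _
  have hsphne : (Metric.sphere (0 : Vm m) 1).Nonempty := by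
    refine ⟨EuclideanSpace.single ⟨0, hm⟩ (1:ℝ), ?_⟩
    simp [EuclideanSpace.norm_single]
  have hFcont : Continuous fun p : Vm m × Vm m => ∑ a ∈ A, ⟪a - p.1, p.2⟫ ^ 2 :=
    continuous_finset_sum _ fun a _ =>
      (Continuous.inner (continuous_const.sub continuous_fst) continuous_snd).pow 2
  obtain ⟨⟨μ0, v0⟩, hmem, hmin⟩ := (hPc.prod hsph).exists_isMinOn (hPne.prod hsphne)
    hFcont.continuousOn
  have hv0 : v0 ≠ 0 := by
    have : ‖v0‖ = 1 := by simpa using hmem.2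
    intro h; rw [h] at this; simp at this
  have hc0pos : 0 < ∑ a ∈ A, ⟪a - μ0, v0⟫ ^ 2 := by
    have := sum_sq_pos hspan (fun _ => 1) (fun a _ => one_pos) μ0 hv0
    simpa using this
  refine ⟨∑ a ∈ A, ⟪a - μ0, v0⟫ ^ 2, hc0pos, ?_⟩
  intro μ hμ y
  rcases eq_or_ne y 0 with rfl | hy
  · simp
  · have hny : 0 < ‖y‖ := norm_pos_iff.mpr hy
    set v : Vm m := ‖y‖⁻¹ • y with hv
    have hvs : v ∈ Metric.sphere (0 : Vm m) 1 := by
      simp [hv, norm_smul, abs_of_nonneg (inv_nonneg.mpr hny.le), inv_mul_cancel₀ hny.ne']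
    have hF := hmin (Set.mk_mem_prod hμ hvs)
    simp only [Set.mem_setOf_eq] at hF
    have hsum : ∑ a ∈ A, ⟪a - μ, v⟫ ^ 2 = ‖y‖⁻¹ ^ 2 * ∑ a ∈ A, ⟪a - μ, y⟫ ^ 2 := by
      rw [Finset.mul_sum]
      refine Finset.sum_congr rfl fun a _ => ?_
      rw [hv, real_inner_smul_right]
      ring
    have h2 : (∑ a ∈ A, ⟪a - μ0, v0⟫ ^ 2) ≤ ‖y‖⁻¹ ^ 2 * ∑ a ∈ A, ⟪a - μ, y⟫ ^ 2 := by
      rw [← hsum]; exact hF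
    calc (∑ a ∈ A, ⟪a - μ0, v0⟫ ^ 2) * ‖y‖ ^ 2
        ≤ (‖y‖⁻¹ ^ 2 * ∑ a ∈ A, ⟪a - μ, y⟫ ^ 2) * ‖y‖ ^ 2 :=
          mul_le_mul_of_nonneg_right h2 (by positivity)
      _ = ∑ a ∈ A, ⟪a - μ, y⟫ ^ 2 := by field_simp

lemma proj_exists (hA : A.Nonempty) (a0 : Vm m) :
    ∃ p ∈ convexHull ℝ (A : Set (Vm m)),
      dist a0 p = Metric.infDist a0 (convexHull ℝ (A : Set (Vm m))) ∧
      ∀ b ∈ convexHull ℝ (A : Set (Vm m)), ⟪a0 - p, b - p⟫ ≤ 0 := by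
  set P := convexHull ℝ (A : Set (Vm m)) with hP
  have hPc : IsCompact P := A.finite_toSet.isCompact_convexHull ℝ
  obtain ⟨a1, ha1⟩ := hA
  have hPne : P.Nonempty := ⟨a1, subset_convexHull ℝ _ ha1⟩
  obtain ⟨p, hp, hdp⟩ := hPc.exists_infDist_eq_dist hPne a0
  refine ⟨p, hp, hdp.symm, ?_⟩
  have hconv : Convex ℝ P := convex_convexHull ℝ _
  have key : ‖a0 - p‖ = ⨅ w : P, ‖a0 - w‖ := by
    rw [← dist_eq_norm, ← hdp, Metric.infDist_eq_iInf]
    congr 1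
  exact (norm_eq_iInf_iff_real_inner_le_zero hconv hp).mp key

set_option maxHeartbeats 2000000 in
lemma main_est (hm : 1 ≤ m) (hA : A.Nonempty) (hα : ∀ a ∈ A, 0 < α a)
    (hspan : affineSpan ℝ (A : Set (Vm m)) = ⊤) (a0 : Vm m) (α0 : ℝ) (hα0 : 0 < α0)
    (hdist : Metric.diam (convexHull ℝ (A : Set (Vm m))) / m <
      Metric.infDist a0 (convexHull ℝ (A : Set (Vm m)))) :
    ∃ u : Vm m, ‖u‖ = 1 ∧ ∃ F : ℝ → ℝ, (∀ t, 0 ≤ F t) ∧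
      Filter.Tendsto F Filter.atTop (nhds 0) ∧
      ∀ t, 0 ≤ t → PsiF A α a0 α0 (t • u) ≤ Real.sqrt (F t) := by
  classical
  set P := convexHull ℝ (A : Set (Vm m)) with hPdef
  have hPc : IsCompact P := A.finite_toSet.isCompact_convexHull ℝ
  set D := Metric.diam P with hDdef
  set d := Metric.infDist a0 P with hddef
  have hm' : (0:ℝ) < m := by exact_mod_cast Nat.lt_of_lt_of_le Nat.zero_lt_one hm
  have hD0 : 0 ≤ D := Metric.diam_nonneg
  have hd : 0 < d := lt_of_le_of_lt (by positivity) hdist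
  have hgap : D < d * m := (div_lt_iff₀ hm').mp hdist
  obtain ⟨p, hp, hdp, hproj⟩ := proj_exists hA a0
  have hnrm : ‖a0 - p‖ = d := by rw [← dist_eq_norm, hdp]
  have hnrm0 : 0 < ‖a0 - p‖ := by rw [hnrm]; exact hd
  set u : Vm m := ‖a0 - p‖⁻¹ • (a0 - p) with hu
  have huno : ‖u‖ = 1 := by
    rw [hu, norm_smul, norm_inv, norm_norm, inv_mul_cancel₀ hnrm0.ne']
  have hpu_le : ∀ b ∈ P, ⟪b - p, u⟫ ≤ 0 := by
    intro b hb
    rw [hu, real_inner_smul_right]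
    apply mul_nonpos_of_nonneg_of_nonpos (inv_nonneg.mpr hnrm0.le)
    rw [real_inner_comm]
    exact hproj b hb
  have ha0u : ⟪a0 - p, u⟫ = d := by
    rw [hu, real_inner_smul_right, real_inner_self_eq_norm_sq, hnrm, sq]
    field_simp
  have hDu : ∀ b ∈ P, ⟪p - b, u⟫ ≤ D := by
    intro b hb
    calc ⟪p - b, u⟫ ≤ ‖p - b‖ * ‖u‖ := real_inner_le_norm _ _
      _ = dist p b := by rw [huno, mul_one, dist_eq_norm]
      _ ≤ D := Metric.dist_le_diam_of_mem hPc.isBounded hp hb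
  -- constants
  set S := ∑ a ∈ A, α a ^ 2 with hSdef
  have hS : 0 < S := Finset.sum_pos (fun a ha => pow_pos (hα a ha) 2) hA
  obtain ⟨amin, haminA, hamin⟩ := A.exists_min_image (fun a => α a ^ 2) hA
  set β := α amin ^ 2 with hβdef
  have hβ : 0 < β := pow_pos (hα amin haminA) 2
  obtain ⟨c0, hc0, hc0le⟩ := exists_c0 hm hA hspan
  set C2 := (D + d) ^ 2 * S / (β * c0) with hC2def
  have hC2 : 0 ≤ C2 := by positivity
  set B := S / α0 ^ 2 with hBdef
  have hB : 0 < B := by positivity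
  refine ⟨u, huno, fun t => B ^ m * Real.exp (-(2 * d * m) * t) +
    B ^ m * C2 * Real.exp (-(2 * (d * m - D)) * t), fun t => by positivity, ?_, ?_⟩
  · have hexp : ∀ c : ℝ, 0 < c →
        Filter.Tendsto (fun t : ℝ => Real.exp (-c * t)) Filter.atTop (nhds 0) := by
      intro c hc
      have h1 : Filter.Tendsto (fun t : ℝ => -c * t) Filter.atTop Filter.atBot := by
        exact Filter.Tendsto.const_mul_atTop_of_neg (neg_neg_iff_pos.mpr hc) Filter.tendsto_id
      exact Real.tendsto_exp_atBot.comp h1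
    have h1 := ((hexp _ (by positivity : (0:ℝ) < 2 * d * m)).const_mul (B ^ m))
    have h2 := ((hexp _ (by nlinarith : (0:ℝ) < 2 * (d * m - D))).const_mul (B ^ m * C2))
    have := h1.add h2
    simpa using this
  · intro t ht
    beta_reduce
    set x : Vm m := t • u with hx
    -- inner product estimates
    have hinx : ∀ v : Vm m, ⟪v, x⟫ = t * ⟪v, u⟫ := fun v => real_inner_smul_right v u t
    have key1 : ∀ a ∈ A, ⟪a, x⟫ ≤ ⟪p, x⟫ := by
      intro a ha
      rw [hinx, hinx]
      apply mul_le_mul_of_nonneg_left _ ht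
      have := hpu_le a (subset_convexHull ℝ _ ha)
      rw [inner_sub_left] at this
      linarith
    have key2 : ∀ a ∈ A, ⟪p, x⟫ - t * D ≤ ⟪a, x⟫ := by
      intro a ha
      rw [hinx, hinx]
      have h1 := hDu a (subset_convexHull ℝ _ ha)
      rw [inner_sub_left] at h1
      have h2 := mul_le_mul_of_nonneg_left h1 ht
      rw [mul_sub] at h2
      linarith
    have key3 : ⟪a0, x⟫ = ⟪p, x⟫ + t * d := by
      rw [hinx, hinx]
      have h1 : ⟪a0 - p, u⟫ = d := ha0u
      rw [inner_sub_left] at h1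
      linear_combination t * h1
    have hK : 0 < covK A α x := covK_pos hA hα x
    have hKup : covK A α x ≤ S * Real.exp (2 * ⟪p, x⟫) := by
      rw [hSdef, Finset.sum_mul]
      refine Finset.sum_le_sum fun a ha => ?_
      have := key1 a ha
      have h2 : Real.exp (2 * ⟪a, x⟫) ≤ Real.exp (2 * ⟪p, x⟫) := by
        apply Real.exp_le_exp.mpr; linarith
      exact mul_le_mul_of_nonneg_left h2 (sq_nonneg (α a))
    -- weight lower bound
    set wlo := β / S * Real.exp (-(2 * (t * D))) with hwlodef
    have hwlo : 0 < wlo := by positivity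
    have hwt : ∀ a ∈ A, wlo ≤ wt A α a x := by
      intro a ha
      have hnum : β * Real.exp (2 * (⟪p, x⟫ - t * D)) ≤ α a ^ 2 * Real.exp (2 * ⟪a, x⟫) := by
        have h1 := hamin a ha
        have h2 : Real.exp (2 * (⟪p, x⟫ - t * D)) ≤ Real.exp (2 * ⟪a, x⟫) := by
          apply Real.exp_le_exp.mpr
          have := key2 a ha
          linarith
        exact mul_le_mul h1 h2 (Real.exp_pos _).le (sq_nonneg _)
      have hle : β * Real.exp (2 * (⟪p, x⟫ - t * D)) / (S * Real.exp (2 * ⟪p, x⟫)) ≤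
          wt A α a x := by
        unfold wt
        exact div_le_div₀ (by positivity) hnum hK hKup
      refine le_trans (le_of_eq ?_) hle
      rw [hwlodef, mul_div_mul_comm, ← Real.exp_sub]
      congr 1
      ring
    -- quadratic lower bound for G
    have hμP : mmap A α x ∈ P := mmap_mem hA hα x
    have hquad : ∀ y : Fin m → ℝ, (c0 * wlo) * (∑ i, y i ^ 2) ≤
        dotProduct y ((Gmat A α x).mulVec y) := by
      intro y
      rw [quad_eq]
      set yv : Vm m := (WithLp.equiv 2 (Fin m → ℝ)).symm y with hyvdef
      have hcoord : ∀ a : Vm m, (∑ i, (a - mmap A α x) i * y i) = ⟪a - mmap A α x, yv⟫ := by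
        intro a
        rw [inner_coords]
        exact Finset.sum_congr rfl fun i _ => rfl
      have hnsq : (∑ i, y i ^ 2) = ‖yv‖ ^ 2 := by
        rw [norm_sq_coords]
        exact Finset.sum_congr rfl fun i _ => rfl
      rw [hnsq]
      calc (c0 * wlo) * ‖yv‖ ^ 2
          = wlo * (c0 * ‖yv‖ ^ 2) := by ring
        _ ≤ wlo * ∑ a ∈ A, ⟪a - mmap A α x, yv⟫ ^ 2 :=
            mul_le_mul_of_nonneg_left (hc0le _ hμP yv) hwlo.le
        _ = ∑ a ∈ A, wlo * ⟪a - mmap A α x, yv⟫ ^ 2 := Finset.mul_sum _ _ _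
        _ ≤ ∑ a ∈ A, wt A α a x * (∑ i, (a - mmap A α x) i * y i) ^ 2 := by
            refine Finset.sum_le_sum fun a ha => ?_
            rw [hcoord a]
            exact mul_le_mul_of_nonneg_right (hwt a ha) (sq_nonneg _)
    -- bound on the quadratic form q
    obtain ⟨hq0, hqle⟩ := invq (Gmat A α x) (Gmat_det_ne hA hα hspan x)
      (mul_pos hc0 hwlo) hquad (fun i => (mmap A α x - a0) i)
    have hqf0 : 0 ≤ qform A α a0 x := hq0
    have hwsum : (∑ i, ((mmap A α x - a0) i) ^ 2) ≤ (D + d) ^ 2 := by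
      rw [← norm_sq_coords]
      have h1 : ‖mmap A α x - a0‖ ≤ D + d := by
        rw [← dist_eq_norm]
        calc dist (mmap A α x) a0 ≤ dist (mmap A α x) p + dist p a0 := dist_triangle _ _ _
          _ ≤ D + d := by
              have := Metric.dist_le_diam_of_mem hPc.isBounded hμP hp
              rw [dist_comm p a0, hdp]
              exact add_le_add this le_rfl
      exact pow_le_pow_left₀ (norm_nonneg _) h1 2
    have hqle2 : qform A α a0 x ≤ C2 * Real.exp (2 * (t * D)) := by
      refine le_trans hqle ?_
      have heq : (D + d) ^ 2 / (c0 * wlo) = C2 * Real.exp (2 * (t * D)) := by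
        rw [hC2def, hwlodef, Real.exp_neg]
        field_simp
      rw [← heq]
      gcongr
    -- K0 facts
    have hf2 : f0e a0 α0 x ^ 2 = α0 ^ 2 * Real.exp (2 * ⟪a0, x⟫) := by
      unfold f0e
      rw [mul_pow, sq (Real.exp _), ← Real.exp_add]
      congr 1
      ring
    have hf2pos : 0 < f0e a0 α0 x ^ 2 := by rw [hf2]; positivity
    have hK0 : 0 < K0e A α a0 α0 x := by unfold K0e; positivity
    have hf2le : f0e a0 α0 x ^ 2 ≤ K0e A α a0 α0 x := by
      unfold K0e; linarith
    have hhle1 : f0e a0 α0 x ^ 2 / K0e A α a0 α0 x ≤ 1 :=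
      (div_le_one hK0).mpr hf2le
    have hKK0nn : 0 ≤ covK A α x / K0e A α a0 α0 x := by positivity
    have hKK0le : covK A α x / K0e A α a0 α0 x ≤ B * Real.exp (-(2 * (t * d))) := by
      have step1 : covK A α x / K0e A α a0 α0 x ≤ covK A α x / f0e a0 α0 x ^ 2 := by
        gcongr
      refine step1.trans ?_
      have step2 : covK A α x / f0e a0 α0 x ^ 2 ≤
          S * Real.exp (2 * ⟪p, x⟫) / (α0 ^ 2 * Real.exp (2 * ⟪a0, x⟫)) := by
        rw [hf2]
        gcongr
      refine step2.trans (le_of_eq ?_)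
      rw [key3, hBdef, mul_div_mul_comm, ← Real.exp_sub]
      congr 1
      ring
    -- assembling
    have hpsi : PsiF A α a0 α0 x =
        Real.sqrt ((covK A α x / K0e A α a0 α0 x) ^ m) *
          Real.sqrt (1 + (f0e a0 α0 x ^ 2 / K0e A α a0 α0 x) * qform A α a0 x) := by
      unfold PsiF
      congr 1
      rw [Real.sqrt_eq_rpow, ← Real.rpow_natCast (covK A α x / K0e A α a0 α0 x) m,
        ← Real.rpow_mul hKK0nn]
      congr 1
      ring
    have hsm : Real.sqrt ((covK A α x / K0e A α a0 α0 x) ^ m) *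
        Real.sqrt (1 + (f0e a0 α0 x ^ 2 / K0e A α a0 α0 x) * qform A α a0 x) =
        Real.sqrt ((covK A α x / K0e A α a0 α0 x) ^ m *
          (1 + (f0e a0 α0 x ^ 2 / K0e A α a0 α0 x) * qform A α a0 x)) :=
      (Real.sqrt_mul (pow_nonneg hKK0nn m) _).symm
    rw [hpsi, hsm]
    apply Real.sqrt_le_sqrt
    have hfac1 : (covK A α x / K0e A α a0 α0 x) ^ m ≤ (B * Real.exp (-(2 * (t * d)))) ^ m :=
      pow_le_pow_left₀ hKK0nn hKK0le m
    have hfac2 : 1 + (f0e a0 α0 x ^ 2 / K0e A α a0 α0 x) * qform A α a0 x ≤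
        1 + C2 * Real.exp (2 * (t * D)) := by
      have h := mul_le_mul_of_nonneg_right hhle1 hqf0
      rw [one_mul] at h
      exact add_le_add_right (h.trans hqle2) 1
    have hfin : (B * Real.exp (-(2 * (t * d)))) ^ m * (1 + C2 * Real.exp (2 * (t * D))) =
        B ^ m * Real.exp (-(2 * d * m) * t) +
          B ^ m * C2 * Real.exp (-(2 * (d * m - D)) * t) := by
      have e1 : (Real.exp (-(2 * (t * d)))) ^ m = Real.exp (-(2 * d * m) * t) := by
        rw [← Real.exp_nat_mul]
        congr 1
        ring
      have e2 : Real.exp (-(2 * d * (m:ℝ)) * t) * Real.exp (2 * (t * D)) =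
          Real.exp (-(2 * ((d * m) - D)) * t) := by
        rw [← Real.exp_add]
        congr 1
        ring
      calc (B * Real.exp (-(2 * (t * d)))) ^ m * (1 + C2 * Real.exp (2 * (t * D)))
          = B ^ m * (Real.exp (-(2 * (t * d))) ^ m) +
            B ^ m * C2 * ((Real.exp (-(2 * (t * d))) ^ m) * Real.exp (2 * (t * D))) := by ring
        _ = B ^ m * Real.exp (-(2 * d * m) * t) +
            B ^ m * C2 * Real.exp (-(2 * (d * m - D)) * t) := by rw [e1, e2]
    rw [← hfin]
    have h1nn : (0:ℝ) ≤ 1 + (f0e a0 α0 x ^ 2 / K0e A α a0 α0 x) * qform A α a0 x := by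
      positivity
    exact mul_le_mul hfac1 hfac2 h1nn (by positivity)
end St7

/-- If the Euclidean distance from `a0` to the Newton polytope
`P = conv(A)` exceeds `diam(P)/m`, then `U₋ = {x : Ψ(x) < 1}` is a nonempty, open
and unbounded subset of `ℝ^m`. -/
theorem statement7 (m : ℕ) (hm : 1 ≤ m) (A : Finset (Vm m)) (hA : A.Nonempty)
    (α : Vm m → ℝ) (hα : ∀ a ∈ A, 0 < α a)
    (hspan : affineSpan ℝ (A : Set (Vm m)) = ⊤)
    (a0 : Vm m) (α0 : ℝ) (hα0 : 0 < α0)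
    (hdist : Metric.diam (convexHull ℝ (A : Set (Vm m))) / m <
      Metric.infDist a0 (convexHull ℝ (A : Set (Vm m)))) :
    {x : Vm m | PsiF A α a0 α0 x < 1}.Nonempty ∧
    IsOpen {x : Vm m | PsiF A α a0 α0 x < 1} ∧
    ¬ Bornology.IsBounded {x : Vm m | PsiF A α a0 α0 x < 1} := by
  have hopen : IsOpen {x : Vm m | PsiF A α a0 α0 x < 1} :=
    isOpen_lt (St7.PsiF_cont hA hα hspan a0 α0 hα0) continuous_const
  obtain ⟨u, huno, F, hFnn, hFt, hFb⟩ := St7.main_est hm hA hα hspan a0 α0 hα0 hdist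
  have hev : ∀ᶠ t in Filter.atTop, F t < 1/2 :=
    hFt.eventually_lt_const (by norm_num : (0:ℝ) < 1/2)
  obtain ⟨T, hT⟩ := Filter.eventually_atTop.mp hev
  have hmem : ∀ t, max T 0 ≤ t → t • u ∈ {x : Vm m | PsiF A α a0 α0 x < 1} := by
    intro t ht'
    have ht0 : 0 ≤ t := le_trans (le_max_right _ _) ht'
    have hlt : F t < 1/2 := hT t (le_trans (le_max_left _ _) ht')
    have hsq : Real.sqrt (F t) < 1 := by
      have h1 : Real.sqrt (F t) < Real.sqrt 1 := Real.sqrt_lt_sqrt (hFnn t) (by linarith)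
      simpa using h1
    exact lt_of_le_of_lt (hFb t ht0) hsq
  refine ⟨⟨(max T 0) • u, hmem _ le_rfl⟩, hopen, ?_⟩
  intro hb
  obtain ⟨C, hC⟩ := isBounded_iff_forall_norm_le.mp hb
  set t := max (max T 0) (C + 1) with htdef
  have h1 : t • u ∈ {x : Vm m | PsiF A α a0 α0 x < 1} := hmem t (le_max_left _ _)
  have h2 := hC _ h1
  have ht0 : 0 ≤ t := le_trans (le_max_right _ _) (le_max_left _ _)
  have hnorm : ‖t • u‖ = t := by
    rw [norm_smul, huno, mul_one, Real.norm_eq_abs, abs_of_nonneg ht0]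
  rw [hnorm] at h2
  have : C + 1 ≤ t := le_max_right _ _
  linarith
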